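/- arXiv:1403.0303 — 3 statements merged into one kernel-verified Lean document; each statement's English description precedes it below -/
import Mathlib

section
/- The map ω ↦ (PS_ω(1),...,PS_ω(n)), where PS_ω(α) is the number of pairs (x,y) with x < y < x+m and ω(x) > ω(y) = α, is injective on the set of finite m-stable permutations in S_n. -/
open Finset

private lemma psq_closure (m : ℕ) (O : ℕ → Prop) (hdc : ∀ x, O (x + m) → O x) :
    ∀ k x, O (x + m * k) → O x := by
  intro k
  induction k with
  | zero => intro x h; simpa using h
  | succ k ih =>
      intro x h
      apply ih
      apply hdc
      have hx : x + m * k + m = x + m * (k + 1) := by ring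
      rw [hx]; exact h

private lemma psq_mod_eq (m a b : ℕ) (hm : 0 < m) (hab : a ≤ b) (h : b < a + m)
    (hmod : a % m = b % m) : a = b := by
  have hd : m ∣ b - a := (Nat.modEq_iff_dvd' hab).mp hmod
  rcases hd with ⟨c, hc⟩
  rcases c with _ | c
  · omega
  · have : m ≤ m * (c + 1) := Nat.le_mul_of_pos_right m (Nat.succ_pos c)
    omega

private lemma psq_key (m : ℕ) (hm : 0 < m) (O : ℕ → Prop) [DecidablePred O]
    (hdc : ∀ x, O (x + m) → O x)
    (y₁ y₂ : ℕ) (h12 : y₁ < y₂) (hy₁ : ¬ O y₁)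
    (hf : m ≤ y₂ → O (y₂ - m)) :
    ((Finset.range y₁).filter fun x => y₁ < x + m ∧ ¬ O x).card <
    ((Finset.range y₂).filter fun x => y₂ < x + m ∧ ¬ O x).card := by
  set s : Finset ℕ := (Finset.range y₁).filter (fun x => y₁ < x + m ∧ ¬ O x) with hs
  set t : Finset ℕ := (Finset.range y₂).filter (fun x => y₂ < x + m ∧ ¬ O x) with ht
  have hy₁s : y₁ ∉ s := by simp [hs]
  have hmem : ∀ x ∈ insert y₁ s, x ≤ y₁ ∧ y₁ < x + m ∧ ¬ O x := by
    intro x hx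
    rcases Finset.mem_insert.mp hx with h | h
    · subst h; exact ⟨le_rfl, by omega, hy₁⟩
    · simp only [hs, Finset.mem_filter, Finset.mem_range] at h
      exact ⟨h.1.le, h.2.1, h.2.2⟩
  have hmap : ∀ x ∈ insert y₁ s, x + m * ((y₂ - 1 - x) / m) ∈ t := by
    intro x hx
    obtain ⟨hxle, hxw, hxO⟩ := hmem x hx
    have hxy : x < y₂ := by omega
    have hqr : m * ((y₂ - 1 - x) / m) + (y₂ - 1 - x) % m = y₂ - 1 - x :=
      Nat.div_add_mod _ _
    have hrm : (y₂ - 1 - x) % m < m := Nat.mod_lt _ hm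
    have hOclo : O (x + m * ((y₂ - 1 - x) / m)) → O x :=
      psq_closure m O hdc _ x
    set r := (y₂ - 1 - x) % m with hrdef
    set Q := m * ((y₂ - 1 - x) / m) with hQdef
    by_cases hcase : r = m - 1
    · exfalso
      have hym : m ≤ y₂ := by omega
      have h2 : y₂ - m = x + Q := by omega
      exact hxO (hOclo (h2 ▸ hf hym))
    · simp only [ht, Finset.mem_filter, Finset.mem_range]
      exact ⟨by omega, by omega, fun h => hxO (hOclo h)⟩
  have hinj : Set.InjOn (fun x => x + m * ((y₂ - 1 - x) / m)) ↑(insert y₁ s) := by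
    intro a ha b hb hab
    obtain ⟨ha1, ha2, -⟩ := hmem a (Finset.mem_coe.mp ha)
    obtain ⟨hb1, hb2, -⟩ := hmem b (Finset.mem_coe.mp hb)
    simp only at hab
    have hmod : a % m = b % m := by
      have h1 : (a + m * ((y₂ - 1 - a) / m)) % m = a % m :=
        Nat.add_mul_mod_self_left a m _
      have h2 : (b + m * ((y₂ - 1 - b) / m)) % m = b % m :=
        Nat.add_mul_mod_self_left b m _
      rw [← h1, ← h2, hab]
    rcases le_total a b with h | h
    · exact psq_mod_eq m a b hm h (by omega) hmod
    · exact (psq_mod_eq m b a hm h (by omega) hmod.symm).symm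
  have hcard := Finset.card_le_card_of_injOn _ hmap hinj
  rw [Finset.card_insert_of_notMem hy₁s] at hcard
  omega

/-- The map `ω ↦ (PS_ω(1),…,PS_ω(n))`, where `PS_ω(α)` counts pairs `(x,y)`
with `x < y < x + m` and `ω(x) > ω(y) = α`, is injective on the set of finite
`m`-stable permutations in `S_n`. -/
theorem stmt_17 (n m : ℕ) (hm : 0 < m)
    (ω₁ ω₂ : Equiv.Perm (Fin n))
    (h₁ : ∀ x y : Fin n, (y : ℕ) = (x : ℕ) + m → ω₁ x < ω₁ y)
    (h₂ : ∀ x y : Fin n, (y : ℕ) = (x : ℕ) + m → ω₂ x < ω₂ y)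
    (hPS : ∀ α : Fin n,
      {p : Fin n × Fin n | p.1 < p.2 ∧ (p.2 : ℕ) < (p.1 : ℕ) + m ∧
        ω₁ p.2 < ω₁ p.1 ∧ ω₁ p.2 = α}.ncard =
      {p : Fin n × Fin n | p.1 < p.2 ∧ (p.2 : ℕ) < (p.1 : ℕ) + m ∧
        ω₂ p.2 < ω₂ p.1 ∧ ω₂ p.2 = α}.ncard) :
    ω₁ = ω₂ := by
  classical
  -- Count PS_ω(α) as the number of free positions in the window before ω⁻¹(α).
  have count : ∀ (ω : Equiv.Perm (Fin n)) (α : Fin n),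
      {p : Fin n × Fin n | p.1 < p.2 ∧ (p.2 : ℕ) < (p.1 : ℕ) + m ∧
        ω p.2 < ω p.1 ∧ ω p.2 = α}.ncard
      = ((Finset.range ((ω.symm α : Fin n) : ℕ)).filter
          (fun k => ((ω.symm α : Fin n) : ℕ) < k + m ∧
            ¬ ∃ h : k < n, ω ⟨k, h⟩ < α)).card := by
    intro ω α
    set y : Fin n := ω.symm α with hy
    have hωy : ω y = α := ω.apply_symm_apply α
    have hfin : {p : Fin n × Fin n | p.1 < p.2 ∧ (p.2 : ℕ) < (p.1 : ℕ) + m ∧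
        ω p.2 < ω p.1 ∧ ω p.2 = α}.Finite := Set.toFinite _
    rw [Set.ncard_eq_toFinset_card _ hfin]
    refine Finset.card_bij' (fun p _ => ((p.1 : ℕ)))
      (fun k hk => (⟨k, by
        have h1 := Finset.mem_range.mp (Finset.mem_filter.mp hk).1
        exact lt_trans h1 y.isLt⟩, y)) ?_ ?_ ?_ ?_
    · intro p hp
      rw [Set.Finite.mem_toFinset] at hp
      obtain ⟨hlt12, hwin, hgt, heq⟩ := hp
      have hp2 : p.2 = y := by rw [hy]; exact (Equiv.eq_symm_apply ω).mpr heq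
      simp only [Finset.mem_filter, Finset.mem_range]
      refine ⟨?_, ?_, ?_⟩
      · rw [← hp2]; exact hlt12
      · rw [← hp2]; exact hwin
      · rintro ⟨h, hlt⟩
        rw [Fin.eta] at hlt
        have : α < ω p.1 := heq ▸ hgt
        exact absurd hlt (not_lt.mpr this.le)
    · intro k hk
      simp only [Finset.mem_filter, Finset.mem_range] at hk
      obtain ⟨hk1, hk2, hk3⟩ := hk
      rw [Set.Finite.mem_toFinset]
      have hkn : k < n := lt_trans hk1 y.isLt
      have hne : (⟨k, hkn⟩ : Fin n) ≠ y := by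
        intro h
        have : k = (y : ℕ) := by rw [← h]
        omega
      have hαle : α ≤ ω ⟨k, hkn⟩ := by
        by_contra hcon
        exact hk3 ⟨hkn, not_le.mp hcon⟩
      have hαne : α ≠ ω ⟨k, hkn⟩ := by
        intro h
        exact hne (ω.injective (by rw [hωy, ← h]))
      refine ⟨?_, ?_, ?_, hωy⟩
      · exact hk1
      · exact hk2
      · rw [hωy]; exact lt_of_le_of_ne hαle hαne
    · intro p hp
      rw [Set.Finite.mem_toFinset] at hp
      obtain ⟨_, _, _, heq⟩ := hp
      have hp2 : p.2 = y := by rw [hy]; exact (Equiv.eq_symm_apply ω).mpr heq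
      ext
      · simp
      · simp [hp2]
    · intro k hk
      rfl
  -- Main induction: the positions of each value agree.
  have main : ∀ N, ∀ α : Fin n, (α : ℕ) < N → ω₁.symm α = ω₂.symm α := by
    intro N
    induction N with
    | zero => intro α hα; omega
    | succ N ih =>
      intro α hα
      rcases Nat.lt_succ_iff_lt_or_eq.mp hα with hc | hc
      · exact ih α hc
      -- IH for all smaller values
      have IH' : ∀ β : Fin n, β < α → ω₁.symm β = ω₂.symm β := by
        intro β hβ
        exact ih β (by rw [Fin.lt_def] at hβ; omega)
      set y₁ : Fin n := ω₁.symm α with hy₁def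
      set y₂ : Fin n := ω₂.symm α with hy₂def
      have hω₁y : ω₁ y₁ = α := ω₁.apply_symm_apply α
      have hω₂y : ω₂ y₂ = α := ω₂.apply_symm_apply α
      set O : ℕ → Prop := fun k => ∃ h : k < n, ω₁ ⟨k, h⟩ < α with hOdef
      have hOeq : ∀ k (h : k < n), (ω₁ ⟨k, h⟩ < α ↔ ω₂ ⟨k, h⟩ < α) := by
        intro k h
        constructor
        · intro hlt
          have h1 := IH' (ω₁ ⟨k, h⟩) hlt
          have h2 : ω₂.symm (ω₁ ⟨k, h⟩) = ⟨k, h⟩ := by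
            rw [← h1]; exact ω₁.symm_apply_apply _
          have h3 : ω₂ ⟨k, h⟩ = ω₁ ⟨k, h⟩ := by
            conv_lhs => rw [← h2]
            exact ω₂.apply_symm_apply _
          rw [h3]; exact hlt
        · intro hlt
          have h1 := IH' (ω₂ ⟨k, h⟩) hlt
          have h2 : ω₁.symm (ω₂ ⟨k, h⟩) = ⟨k, h⟩ := by
            rw [h1]; exact ω₂.symm_apply_apply _
          have h3 : ω₁ ⟨k, h⟩ = ω₂ ⟨k, h⟩ := by
            conv_lhs => rw [← h2]
            exact ω₁.apply_symm_apply _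
          rw [h3]; exact hlt
      have hdc : ∀ x, O (x + m) → O x := by
        rintro x ⟨hxm, hlt⟩
        have hx : x < n := by omega
        refine ⟨hx, lt_trans (h₁ ⟨x, hx⟩ ⟨x + m, hxm⟩ rfl) hlt⟩
      have hy₁O : ¬ O (y₁ : ℕ) := by
        rintro ⟨h, hlt⟩
        rw [Fin.eta, hω₁y] at hlt
        exact lt_irrefl _ hlt
      have hy₂O : ¬ O (y₂ : ℕ) := by
        rintro ⟨h, hlt⟩
        rw [(hOeq _ h), Fin.eta, hω₂y] at hlt
        exact lt_irrefl _ hlt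
      have hf₁ : m ≤ (y₁ : ℕ) → O ((y₁ : ℕ) - m) := by
        intro hmy
        have hlt : (y₁ : ℕ) - m < n := by have := y₁.isLt; omega
        refine ⟨hlt, ?_⟩
        have := h₁ ⟨(y₁ : ℕ) - m, hlt⟩ y₁ (by simp; omega)
        rw [hω₁y] at this
        exact this
      have hf₂ : m ≤ (y₂ : ℕ) → O ((y₂ : ℕ) - m) := by
        intro hmy
        have hlt : (y₂ : ℕ) - m < n := by have := y₂.isLt; omega
        refine ⟨hlt, ?_⟩
        rw [hOeq _ hlt]
        have := h₂ ⟨(y₂ : ℕ) - m, hlt⟩ y₂ (by simp; omega)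
        rw [hω₂y] at this
        exact this
      -- rewrite the PS equality
      have hcount := hPS α
      rw [count ω₁ α, count ω₂ α] at hcount
      have hconv1 : ((Finset.range ((ω₁.symm α : Fin n) : ℕ)).filter
            (fun k => ((ω₁.symm α : Fin n) : ℕ) < k + m ∧
              ¬ ∃ h : k < n, ω₁ ⟨k, h⟩ < α))
          = ((Finset.range ((y₁ : Fin n) : ℕ)).filter
            (fun k => ((y₁ : Fin n) : ℕ) < k + m ∧ ¬ O k)) := by
        rfl
      have hconv2 : ((Finset.range ((ω₂.symm α : Fin n) : ℕ)).filter
            (fun k => ((ω₂.symm α : Fin n) : ℕ) < k + m ∧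
              ¬ ∃ h : k < n, ω₂ ⟨k, h⟩ < α))
          = ((Finset.range ((y₂ : Fin n) : ℕ)).filter
            (fun k => ((y₂ : Fin n) : ℕ) < k + m ∧ ¬ O k)) := by
        apply Finset.filter_congr
        intro k hk
        rw [Finset.mem_range] at hk
        have hkn : k < n := lt_trans hk y₂.isLt
        constructor
        · rintro ⟨h1, h2⟩
          refine ⟨h1, fun hO => h2 ?_⟩
          obtain ⟨h, hlt⟩ := hO
          exact ⟨h, (hOeq k h).mp hlt⟩
        · rintro ⟨h1, h2⟩
          refine ⟨h1, fun hO => h2 ?_⟩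
          obtain ⟨h, hlt⟩ := hO
          exact ⟨h, (hOeq k h).mpr hlt⟩
      rw [hconv1, hconv2] at hcount
      -- conclude y₁ = y₂
      show y₁ = y₂
      by_contra hne
      have hvne : (y₁ : ℕ) ≠ (y₂ : ℕ) := fun h => hne (Fin.ext h)
      rcases lt_or_gt_of_ne hvne with h | h
      · have := psq_key m hm O hdc (y₁ : ℕ) (y₂ : ℕ) h hy₁O hf₂
        omega
      · have := psq_key m hm O hdc (y₂ : ℕ) (y₁ : ℕ) h hy₂O hf₁
        omega
  have hsymm : ω₁.symm = ω₂.symm := Equiv.ext fun α => main n α α.isLt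
  calc ω₁ = ω₁.symm.symm := (Equiv.symm_symm ω₁).symm
    _ = ω₂.symm.symm := by rw [hsymm]
    _ = ω₂ := Equiv.symm_symm ω₂
end

section
/- For ω ∈ S_n finite m-stable, the function g(α,i) := #{j ∈ (i-m, i] ∩ {1,...,n} : ω(j) > α} is nondecreasing in i for each fixed α. -/
lemma stmt_18_step (n m : ℕ) (hm : 0 < m) (ω : ℕ → ℕ)
    (hst : ∀ x : ℕ, 1 ≤ x → x + m ≤ n → ω x < ω (x + m))
    (α k : ℕ) (hk : k + 1 ≤ n) :
    ((Finset.Icc 1 n).filter fun j => k < j + m ∧ j ≤ k ∧ α < ω j).card ≤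
    ((Finset.Icc 1 n).filter fun j => k + 1 < j + m ∧ j ≤ k + 1 ∧ α < ω j).card := by
  apply Finset.card_le_card_of_injOn (fun j => if j + m = k + 1 then k + 1 else j)
  · intro j hj
    simp only [Finset.mem_coe, Finset.mem_filter, Finset.mem_Icc] at hj ⊢
    obtain ⟨⟨hj1, hjn⟩, hkj, hjk, hαj⟩ := hj
    split_ifs with h
    · refine ⟨⟨by omega, hk⟩, by omega, le_refl _, ?_⟩
      have := hst j hj1 (by omega)
      rw [h] at this
      omega
    · exact ⟨⟨hj1, hjn⟩, by omega, by omega, hαj⟩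
  · intro j1 h1 j2 h2 heq
    simp only [Finset.coe_filter, Set.mem_setOf_eq, Finset.mem_Icc] at h1 h2
    simp only at heq
    split_ifs at heq with ha hb hb <;> omega

/-- For `ω ∈ S_n` finite `m`-stable (viewed as a bijection of `{1,…,n}`),
the function `g(α,i) = #{j ∈ (i-m, i] ∩ {1,…,n} : ω(j) > α}` is
nondecreasing in `i` for each fixed `α`. -/
theorem stmt_18 (n m : ℕ) (hm : 0 < m) (ω : ℕ → ℕ)
    (hbij : Set.BijOn ω (Set.Icc 1 n) (Set.Icc 1 n))
    (hst : ∀ x : ℕ, 1 ≤ x → x + m ≤ n → ω x < ω (x + m)) :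
    ∀ α : ℕ, 1 ≤ α → α ≤ n →
    ∀ i i' : ℕ, 1 ≤ i → i ≤ i' → i' ≤ n →
      ((Finset.Icc 1 n).filter fun j => i < j + m ∧ j ≤ i ∧ α < ω j).card ≤
      ((Finset.Icc 1 n).filter fun j => i' < j + m ∧ j ≤ i' ∧ α < ω j).card := by
  intro α hα1 hαn i i' hi hii' hi'n
  induction i', hii' using Nat.le_induction with
  | base => exact le_refl _
  | succ k hk ih =>
    exact le_trans (ih (by omega)) (stmt_18_step n m hm ω hst α k hi'n)
end

section
/- The image of the map inv² from the set of 2-stable permutations of S_n to {0,1}^n, defined by inv²_ω(α) = 1 if ω(ω^{-1}(α) - 1) > α and 0 otherwise (with the convention that the value is 0 when ω^{-1}(α) = 1), consists exactly of all binary sequences f = (f_1,...,f_n) such that for every α, at least half of the entries f_α, f_{α+1}, ..., f_n are 0. -/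
open Finset


/-- 2-stable lists: every element is less than the one two positions later. -/
def TS : List ℕ → Prop
  | a :: b :: c :: l => a < c ∧ TS (b :: c :: l)
  | _ => True

/-- `Desc f w` : each non-initial entry `b`, with predecessor `a`, has `f b = decide (b < a)`. -/
def Desc (f : ℕ → Bool) : List ℕ → Prop
  | a :: b :: l => (f b = decide (b < a)) ∧ Desc f (b :: l)
  | _ => True

lemma ts_tail {a : ℕ} {l : List ℕ} (h : TS (a :: l)) : TS l := by
  match l with
  | [] => trivial
  | [b] => trivial
  | b :: c :: l' => exact h.2

lemma ts_cons {a : ℕ} {l : List ℕ} (hl : TS l)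
    (h : ∀ b c l', l = b :: c :: l' → a < c) : TS (a :: l) := by
  match l with
  | [] => trivial
  | [b] => trivial
  | b :: c :: l' => exact ⟨h b c l' rfl, hl⟩

lemma desc_cons {f : ℕ → Bool} {a : ℕ} {l : List ℕ} (hl : Desc f l)
    (h : ∀ b l', l = b :: l' → f b = decide (b < a)) : Desc f (a :: l) := by
  match l with
  | [] => trivial
  | b :: l' => exact ⟨h b l' rfl, hl⟩

lemma ts_get : ∀ (l : List ℕ), TS l → ∀ i : ℕ, (hi : i + 2 < l.length) →
    l[i]'(by omega) < l[i+2]'hi := by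
  intro l
  induction l with
  | nil => intro _ i hi; simp at hi
  | cons a l ih =>
    intro h i hi
    match i with
    | 0 =>
      match l with
      | b :: c :: l' => simpa using h.1
    | Nat.succ i =>
      have hi' : i + 2 < l.length := by simp at hi; omega
      simpa using ih (ts_tail h) i hi'

lemma desc_tail {f : ℕ → Bool} {a : ℕ} {l : List ℕ} (h : Desc f (a :: l)) : Desc f l := by
  match l with
  | [] => trivial
  | b :: l' => exact h.2

lemma desc_get : ∀ (l : List ℕ) (f : ℕ → Bool), Desc f l → ∀ i : ℕ, (hi : i + 1 < l.length) →
    f (l[i+1]'hi) = decide ((l[i+1]'hi) < l[i]'(by omega)) := by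
  intro l f
  induction l with
  | nil => intro _ i hi; simp at hi
  | cons a l ih =>
    intro h i hi
    match i with
    | 0 =>
      match l with
      | b :: l' => simpa using h.1
    | Nat.succ i =>
      have hi' : i + 1 < l.length := by simp at hi; omega
      simpa using ih (desc_tail h) i hi'

lemma ts_nil : TS [] := trivial

lemma desc_nil (f : ℕ → Bool) : Desc f [] := trivial



set_option maxHeartbeats 1000000 in
lemma construct : ∀ (N : ℕ) (f : ℕ → Bool) (V : Finset ℕ), V.card ≤ N →
    (∀ α : ℕ, (V.filter fun v => α ≤ v ∧ f v = true).card
      ≤ (V.filter fun v => α ≤ v ∧ f v = false).card) →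
    ∃ w : List ℕ, w.Nodup ∧ w.toFinset = V ∧ TS w ∧ Desc f w ∧
      ∀ a ∈ w.head?, (f a = false ∧ ∀ v ∈ V, f v = false → a ≤ v) := by
  intro N
  induction N with
  | zero =>
    intro f V hcard _
    have hV : V = ∅ := card_eq_zero.mp (Nat.le_zero.mp hcard)
    exact ⟨[], by simp [hV, ts_nil, desc_nil]⟩
  | succ N ih =>
    intro f V hcard hb
    rcases eq_or_ne V ∅ with hV | hV
    · exact ⟨[], by simp [hV, ts_nil, desc_nil]⟩
    have hne : V.Nonempty := nonempty_iff_ne_empty.mpr hV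
    set t := V.min' hne with ht
    have htV : t ∈ V := V.min'_mem hne
    have htmin : ∀ v ∈ V, t ≤ v := fun v hv => V.min'_le v hv
    by_cases hft : f t = false
    · -- head is the singleton t
      set V' := V.erase t with hV'
      have hV'card : V'.card ≤ N := by
        rw [hV', card_erase_of_mem htV]; omega
      have hb' : ∀ α : ℕ, (V'.filter fun v => α ≤ v ∧ f v = true).card
          ≤ (V'.filter fun v => α ≤ v ∧ f v = false).card := by
        intro α
        have hTT : (V'.filter fun v => α ≤ v ∧ f v = true)
            = (V.filter fun v => α ≤ v ∧ f v = true) := by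
          rw [hV', filter_erase]
          apply erase_eq_of_notMem
          simp [hft]
        rw [hTT, hV', filter_erase]
        rcases le_or_gt α t with hαt | hαt
        · -- use ballot at t+1
          have e1 : (V.filter fun v => α ≤ v ∧ f v = true)
              = (V.filter fun v => t + 1 ≤ v ∧ f v = true) := by
            apply filter_congr
            intro v hv
            have h1 := htmin v hv
            constructor
            · rintro ⟨h2, h3⟩
              refine ⟨?_, h3⟩
              rcases eq_or_ne v t with rfl | hvt
              · rw [h3] at hft; exact absurd hft (by simp)
              · omega
            · rintro ⟨h2, h3⟩; exact ⟨by omega, h3⟩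
          have e2 : ((V.filter fun v => α ≤ v ∧ f v = false).erase t)
              = (V.filter fun v => t + 1 ≤ v ∧ f v = false) := by
            ext v
            simp only [mem_erase, mem_filter]
            constructor
            · rintro ⟨hvt, hv, h2, h3⟩
              have := htmin v hv
              exact ⟨hv, by omega, h3⟩
            · rintro ⟨hv, h2, h3⟩
              exact ⟨by omega, hv, by omega, h3⟩
          rw [e1, e2]; exact hb (t+1)
        · -- t not in the filtered false set
          rw [erase_eq_of_notMem (by simp; intro _ h; omega)]
          exact hb α
      obtain ⟨w', hnd', htf', hts', hdesc', hhead'⟩ := ih f V' hV'card hb'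
      have hmemw' : ∀ v ∈ w', v ∈ V' := fun v hv => by
        rw [← htf']; exact List.mem_toFinset.mpr hv
      refine ⟨t :: w', ?_, ?_, ?_, ?_, ?_⟩
      · refine List.nodup_cons.mpr ⟨fun h => ?_, hnd'⟩
        have := hmemw' t h
        simp [hV'] at this
      · simp [htf', hV', insert_erase htV]
      · apply ts_cons hts'
        intro b c l' hw'
        have hc : c ∈ V' := hmemw' c (by simp [hw'])
        have h1 : c ≠ t ∧ c ∈ V := mem_erase.mp hc
        have h2 := htmin c h1.2
        omega
      · apply desc_cons hdesc'
        intro b l' hw'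
        have hbV' : b ∈ V' := hmemw' b (by simp [hw'])
        have h1 : b ≠ t ∧ b ∈ V := mem_erase.mp hbV'
        have h2 := htmin b h1.2
        have hbt : ¬ (b < t) := by omega
        have hfb : f b = false := (hhead' b (by simp [hw'])).1
        simp [hfb, hbt]
      · intro a ha
        simp only [List.head?_cons, Option.mem_some_iff] at ha
        subst ha
        exact ⟨hft, fun v hv _ => htmin v hv⟩
    · -- f t = true : head is pair (m, t)
      have hftt : f t = true := by
        cases h : f t with
        | false => exact absurd h hft
        | true => rfl
      have hFs : (V.filter fun v => f v = false).Nonempty := by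
        have h0 := hb 0
        have h1 : t ∈ (V.filter fun v => 0 ≤ v ∧ f v = true) := by
          simp [htV, hftt]
        have h2 : 0 < (V.filter fun v => 0 ≤ v ∧ f v = false).card := by
          have := card_pos.mpr ⟨t, h1⟩
          omega
        obtain ⟨m, hm⟩ := card_pos.mp h2
        exact ⟨m, by simp only [mem_filter] at hm ⊢; exact ⟨hm.1, hm.2.2⟩⟩
      set m := (V.filter fun v => f v = false).min' hFs with hm
      have hmmem : m ∈ (V.filter fun v => f v = false) :=
        min'_mem _ hFs
      have hmV : m ∈ V := (mem_filter.mp hmmem).1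
      have hfm : f m = false := (mem_filter.mp hmmem).2
      have hmmin : ∀ v ∈ V, f v = false → m ≤ v := by
        intro v hv hfv
        exact min'_le _ v (mem_filter.mpr ⟨hv, hfv⟩)
      have hmt : t < m := by
        have h1 := htmin m hmV
        by_cases h2 : m = t
        · rw [h2, hftt] at hfm; exact absurd hfm (by simp)
        · omega
      -- no false value lies in [0, m) : all false values are ≥ m
      set V' := (V.erase t).erase m with hV'
      have hmV'' : m ∈ V.erase t := mem_erase.mpr ⟨by omega, hmV⟩
      have hV'card : V'.card ≤ N := by
        rw [hV', card_erase_of_mem hmV'', card_erase_of_mem htV]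
        omega
      have hmemV' : ∀ v ∈ V', v ∈ V ∧ v ≠ t ∧ v ≠ m := by
        intro v hv
        rw [hV'] at hv
        have h1 := mem_erase.mp hv
        have h2 := mem_erase.mp h1.2
        exact ⟨h2.2, h2.1, h1.1⟩
      -- ballot condition for V'
      have hb' : ∀ α : ℕ, (V'.filter fun v => α ≤ v ∧ f v = true).card
          ≤ (V'.filter fun v => α ≤ v ∧ f v = false).card := by
        intro α
        have hTT : (V'.filter fun v => α ≤ v ∧ f v = true)
            = (V.filter fun v => α ≤ v ∧ f v = true).erase t := by
          have h0 : m ∉ ((V.filter fun v => α ≤ v ∧ f v = true).erase t) := by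
            simp [hfm]
          rw [hV', filter_erase, filter_erase, erase_eq_of_notMem h0]
        have hFF : (V'.filter fun v => α ≤ v ∧ f v = false)
            = (V.filter fun v => α ≤ v ∧ f v = false).erase m := by
          have h0 : t ∉ (V.filter fun v => α ≤ v ∧ f v = false) := by
            simp [hftt]
          rw [hV', filter_erase, filter_erase, erase_eq_of_notMem h0]
        rw [hTT, hFF]
        rcases le_or_gt α t with hαt | hαt
        · -- α ≤ t : both sets lose one element
          have h1 : t ∈ (V.filter fun v => α ≤ v ∧ f v = true) := by
            simp [htV, hftt, hαt]
          have h2 : m ∈ (V.filter fun v => α ≤ v ∧ f v = false) := by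
            simp only [mem_filter]
            exact ⟨hmV, by omega, hfm⟩
          rw [card_erase_of_mem h1, card_erase_of_mem h2]
          exact Nat.sub_le_sub_right (hb α) 1
        rcases le_or_gt α m with hαm | hαm
        · -- t < α ≤ m
          have h0 : t ∉ (V.filter fun v => α ≤ v ∧ f v = true) := by
            intro hmem
            have := (mem_filter.mp hmem).2.1
            omega
          rw [erase_eq_of_notMem h0]
          have h2 : m ∈ (V.filter fun v => α ≤ v ∧ f v = false) := by
            simp only [mem_filter]
            exact ⟨hmV, by omega, hfm⟩
          rw [card_erase_of_mem h2]
          -- trues[α] ≤ trues[t+1], falses[α] = falses[t+1],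
          -- trues[t] = trues[t+1]+1, falses[t] = falses[t+1], ballot at t
          have e1 : (V.filter fun v => α ≤ v ∧ f v = true).card
              ≤ (V.filter fun v => t + 1 ≤ v ∧ f v = true).card := by
            apply card_le_card
            intro v hv
            simp only [mem_filter] at hv ⊢
            exact ⟨hv.1, by omega, hv.2.2⟩
          have e2 : (V.filter fun v => α ≤ v ∧ f v = false)
              = (V.filter fun v => t + 1 ≤ v ∧ f v = false) := by
            apply filter_congr
            intro v hv
            constructor
            · rintro ⟨h3, h4⟩
              have := hmmin v hv h4
              exact ⟨by omega, h4⟩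
            · rintro ⟨h3, h4⟩
              have := hmmin v hv h4
              exact ⟨by omega, h4⟩
          have e3 : (V.filter fun v => t ≤ v ∧ f v = true)
              = insert t (V.filter fun v => t + 1 ≤ v ∧ f v = true) := by
            ext v
            simp only [mem_insert, mem_filter]
            constructor
            · rintro ⟨hv, h3, h4⟩
              rcases eq_or_ne v t with rfl | h5
              · exact Or.inl rfl
              · exact Or.inr ⟨hv, by omega, h4⟩
            · rintro (rfl | ⟨hv, h3, h4⟩)
              · exact ⟨htV, le_refl _, hftt⟩
              · exact ⟨hv, by omega, h4⟩
          have e4 : (V.filter fun v => t ≤ v ∧ f v = false)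
              = (V.filter fun v => t + 1 ≤ v ∧ f v = false) := by
            apply filter_congr
            intro v hv
            constructor
            · rintro ⟨h3, h4⟩
              have := hmmin v hv h4
              exact ⟨by omega, h4⟩
            · rintro ⟨h3, h4⟩
              exact ⟨by omega, h4⟩
          have e5 : t ∉ (V.filter fun v => t + 1 ≤ v ∧ f v = true) := by
            simp
          have h6 := hb t
          rw [e3, e4, card_insert_of_notMem e5] at h6
          rw [e2]
          omega
        · -- m < α : neither t nor m is in the sets
          have h0 : t ∉ (V.filter fun v => α ≤ v ∧ f v = true) := by
            intro hmem
            have := (mem_filter.mp hmem).2.1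
            omega
          have h1 : m ∉ (V.filter fun v => α ≤ v ∧ f v = false) := by
            intro hmem
            have := (mem_filter.mp hmem).2.1
            omega
          rw [erase_eq_of_notMem h0, erase_eq_of_notMem h1]
          exact hb α
      obtain ⟨w', hnd', htf', hts', hdesc', hhead'⟩ := ih f V' hV'card hb'
      have hmemw' : ∀ v ∈ w', v ∈ V' := fun v hv => by
        rw [← htf']; exact List.mem_toFinset.mpr hv
      -- every false element of V' is > m
      have hfalse' : ∀ v ∈ V', f v = false → m < v := by
        intro v hv hfv
        have h1 := hmemV' v hv
        have h2 := hmmin v h1.1 hfv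
        rcases eq_or_ne v m with rfl | h3
        · exact absurd rfl h1.2.2
        · omega
      refine ⟨m :: t :: w', ?_, ?_, ?_, ?_, ?_⟩
      · refine List.nodup_cons.mpr ⟨?_, List.nodup_cons.mpr ⟨fun h => ?_, hnd'⟩⟩
        · intro h
          rcases List.mem_cons.mp h with h | h
          · omega
          · exact (hmemV' m (hmemw' m h)).2.2 rfl
        · exact (hmemV' t (hmemw' t h)).2.1 rfl
      · rw [List.toFinset_cons, List.toFinset_cons, htf', hV']
        apply Finset.ext
        intro v
        simp only [mem_insert, mem_erase]
        constructor
        · rintro (rfl | rfl | ⟨h1, h2, h3⟩)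
          · exact hmV
          · exact htV
          · exact h3
        · intro hv
          rcases eq_or_ne v m with rfl | h1
          · exact Or.inl rfl
          rcases eq_or_ne v t with rfl | h2
          · exact Or.inr (Or.inl rfl)
          · exact Or.inr (Or.inr ⟨h1, h2, hv⟩)
      · -- TS (m :: t :: w')
        apply ts_cons
        · apply ts_cons hts'
          intro b c l' hw'
          have h1 := hmemV' c (hmemw' c (by simp [hw']))
          have h2 := htmin c h1.1
          omega
        · intro b c l' hw'
          rw [List.cons.injEq] at hw'
          obtain ⟨hb1, hcw'⟩ := hw'
          have hcmem : c ∈ w' := by rw [hcw']; simp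
          have hfc : f c = false := (hhead' c (by rw [hcw']; simp)).1
          exact hfalse' c (hmemw' c hcmem) hfc
      · -- Desc f (m :: t :: w')
        apply desc_cons
        · apply desc_cons hdesc'
          intro b l' hw'
          have h1 := hmemV' b (hmemw' b (by simp [hw']))
          have h2 := htmin b h1.1
          have hbt : ¬ (b < t) := by omega
          have hfb : f b = false := (hhead' b (by simp [hw'])).1
          simp [hfb, hbt]
        · intro b l' hw'
          have hbt : b = t := by injection hw' with h1 h2; exact h1.symm
          subst hbt
          simp [hftt, hmt]
      · intro a ha
        simp only [List.head?_cons, Option.mem_some_iff] at ha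
        subst ha
        exact ⟨hfm, hmmin⟩



lemma ncard_setOf_eq_card_filter {n : ℕ} (P : Fin n → Prop) [DecidablePred P] :
    {β : Fin n | P β}.ncard = (Finset.univ.filter P).card := by
  rw [show {β : Fin n | P β} = ↑(Finset.univ.filter P) by ext β; simp,
    Set.ncard_coe_finset]

lemma card_filter_univ_eq_range {n : ℕ} (P : Fin n → Prop) [DecidablePred P]
    (Q : ℕ → Prop) [DecidablePred Q] (h : ∀ β : Fin n, P β ↔ Q β.val) :
    (Finset.univ.filter P).card = ((Finset.range n).filter Q).card := by
  refine Finset.card_bij (fun β _ => (β : ℕ)) ?_ ?_ ?_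
  · intro β hβ
    simp only [mem_filter, mem_range]
    exact ⟨β.isLt, (h β).mp (mem_filter.mp hβ).2⟩
  · intro a _ b _ hab
    exact Fin.val_injective hab
  · intro v hv
    simp only [mem_filter, mem_range] at hv
    exact ⟨⟨v, hv.1⟩, mem_filter.mpr ⟨mem_univ _, (h ⟨v, hv.1⟩).mpr hv.2⟩, rfl⟩

/-- The image of the map `inv²` from `2`-stable permutations of `S_n` to binary
sequences, where `inv²_ω(α) = 1` iff the position of `α` has a predecessor
carrying a larger value, consists exactly of the binary sequences `f` such that
for every `α`, at least half of `f_α, …, f_n` are `0`. -/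
theorem stmt_19 (n : ℕ) (f : Fin n → Bool) :
    (∃ ω : Equiv.Perm (Fin n),
      (∀ x y : Fin n, (y : ℕ) = (x : ℕ) + 2 → ω x < ω y) ∧
      (∀ α : Fin n, f α = true ↔
        ∃ x y : Fin n, (x : ℕ) + 1 = (y : ℕ) ∧ ω y = α ∧ α < ω x)) ↔
    (∀ α : Fin n,
      {β : Fin n | α ≤ β ∧ f β = true}.ncard ≤
      {β : Fin n | α ≤ β ∧ f β = false}.ncard) := by
  classical
  constructor
  · rintro ⟨ω, h2s, hinv⟩ α
    set g : Fin n → Fin n :=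
      fun β => ω ⟨(ω.symm β : ℕ) - 1,
        lt_of_le_of_lt (Nat.sub_le _ _) (ω.symm β).isLt⟩ with hg
    have key : ∀ β : Fin n, α ≤ β ∧ f β = true →
        ∃ x y : Fin n, (x : ℕ) + 1 = (y : ℕ) ∧ ω y = β ∧ β < ω x ∧ g β = ω x := by
      intro β hβ
      obtain ⟨x, y, hxy, hωy, hlt⟩ := (hinv β).mp hβ.2
      have hsymm : ω.symm β = y := by rw [← hωy]; simp
      have hidx : (⟨(ω.symm β : ℕ) - 1,
          lt_of_le_of_lt (Nat.sub_le _ _) (ω.symm β).isLt⟩ : Fin n) = x := by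
        apply Fin.ext
        simp only [hsymm]
        omega
      exact ⟨x, y, hxy, hωy, hlt, by rw [hg]; simp only [hidx]⟩
    have hmaps : ∀ β ∈ {β : Fin n | α ≤ β ∧ f β = true},
        g β ∈ {β : Fin n | α ≤ β ∧ f β = false} := by
      intro β hβ
      obtain ⟨x, y, hxy, hωy, hlt, hgx⟩ := key β hβ
      constructor
      · have h1 : (α : ℕ) ≤ (β : ℕ) := hβ.1
        have h2 : (β : ℕ) < (ω x : ℕ) := hlt
        rw [hgx]
        exact Fin.le_def.mpr (by omega)
      · rw [hgx]
        by_contra hcon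
        have hcon' : f (ω x) = true := by
          cases hfc : f (ω x) with
          | false => exact absurd hfc hcon
          | true => rfl
        obtain ⟨x', y', hxy', hωy', hlt'⟩ := (hinv (ω x)).mp hcon'
        have hy'x : y' = x := ω.injective hωy'
        have h2s' : ω x' < ω y := h2s x' y (by
          have h1 : (y' : ℕ) = (x : ℕ) := by rw [hy'x]
          omega)
        rw [hωy] at h2s'
        have a1 : (ω x' : ℕ) < (β : ℕ) := h2s'
        have a2 : (β : ℕ) < (ω x : ℕ) := hlt
        have a3 : (ω x : ℕ) < (ω x' : ℕ) := hlt'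
        omega
    have hinj : Set.InjOn g {β : Fin n | α ≤ β ∧ f β = true} := by
      intro β₁ h₁ β₂ h₂ heq
      obtain ⟨x₁, y₁, hxy₁, hωy₁, _, hg₁⟩ := key β₁ h₁
      obtain ⟨x₂, y₂, hxy₂, hωy₂, _, hg₂⟩ := key β₂ h₂
      rw [hg₁, hg₂] at heq
      have hx : x₁ = x₂ := ω.injective heq
      have hy : y₁ = y₂ := by
        apply Fin.ext
        have := Fin.val_eq_of_eq hx
        omega
      rw [← hωy₁, ← hωy₂, hy]
    exact Set.ncard_le_ncard_of_injOn g hmaps hinj (Set.toFinite _)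
  · intro hf
    set F : ℕ → Bool := fun v => if h : v < n then f ⟨v, h⟩ else false with hF
    have hFval : ∀ β : Fin n, F (β : ℕ) = f β := by
      intro β
      rw [hF]
      simp only [β.isLt, dif_pos]
    have hb : ∀ a : ℕ, ((range n).filter fun v => a ≤ v ∧ F v = true).card
        ≤ ((range n).filter fun v => a ≤ v ∧ F v = false).card := by
      intro a
      by_cases ha : a < n
      · have e1 : ((range n).filter fun v => a ≤ v ∧ F v = true).card
            = (Finset.univ.filter fun β : Fin n => (⟨a, ha⟩ : Fin n) ≤ β ∧ f β = true).card := by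
          symm
          apply card_filter_univ_eq_range
          intro β
          rw [Fin.le_def, hFval]
        have e2 : ((range n).filter fun v => a ≤ v ∧ F v = false).card
            = (Finset.univ.filter fun β : Fin n => (⟨a, ha⟩ : Fin n) ≤ β ∧ f β = false).card := by
          symm
          apply card_filter_univ_eq_range
          intro β
          rw [Fin.le_def, hFval]
        rw [e1, e2]
        have := hf ⟨a, ha⟩
        rwa [ncard_setOf_eq_card_filter, ncard_setOf_eq_card_filter] at this
      · have h0 : ((range n).filter fun v => a ≤ v ∧ F v = true) = ∅ := by
          apply filter_eq_empty_iff.mpr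
          intro v hv
          rw [mem_range] at hv
          rintro ⟨h1, _⟩
          omega
        simp [h0]
    obtain ⟨w, hnd, htf, hts, hdesc, hhead⟩ := construct n F (range n) (by simp) hb
    have hlen : w.length = n := by
      have h1 := List.toFinset_card_of_nodup hnd
      rw [htf, card_range] at h1
      omega
    have hwlt : ∀ v ∈ w, v < n := by
      intro v hv
      have : v ∈ w.toFinset := List.mem_toFinset.mpr hv
      rw [htf, mem_range] at this
      exact this
    have hget_lt : ∀ i : Fin n, w[(i : ℕ)]'(by rw [hlen]; exact i.isLt) < n := by
      intro i
      exact hwlt _ (List.getElem_mem _)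
    set g : Fin n → Fin n :=
      fun i => ⟨w[(i : ℕ)]'(by rw [hlen]; exact i.isLt), hget_lt i⟩ with hg
    have hginj : Function.Injective g := by
      intro i j hij
      have h1 : w[(i : ℕ)]'(by rw [hlen]; exact i.isLt)
          = w[(j : ℕ)]'(by rw [hlen]; exact j.isLt) := by
        have := congrArg Fin.val hij
        simpa [hg] using this
      have h2 := List.nodup_iff_injective_getElem.mp hnd
        (a₁ := ⟨(i : ℕ), by rw [hlen]; exact i.isLt⟩)
        (a₂ := ⟨(j : ℕ), by rw [hlen]; exact j.isLt⟩) h1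
      apply Fin.ext
      have h3 := congrArg Fin.val h2
      exact h3
    refine ⟨Equiv.ofBijective g (Finite.injective_iff_bijective.mp hginj), ?_, ?_⟩
    · intro x y hxy
      have h2 : (x : ℕ) + 2 < w.length := by rw [hlen]; omega
      have h3 := ts_get w hts (x : ℕ) h2
      show g x < g y
      rw [Fin.lt_def]
      simp only [hg]
      simp only [hxy]
      exact h3
    · intro α
      constructor
      · intro hfα
        have hα : (α : ℕ) ∈ w := by
          rw [← List.mem_toFinset, htf, mem_range]
          exact α.isLt
        obtain ⟨j, hj, hgetj⟩ := List.mem_iff_getElem.mp hα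
        match j, hj, hgetj with
        | 0, hj, hgetj =>
          exfalso
          have hmem0 : w[0]'hj ∈ w.head? := by
            rw [List.head?_eq_getElem?]
            simp [List.getElem?_eq_getElem hj]
          have hh := (hhead _ hmem0).1
          rw [hgetj, hFval, hfα] at hh
          exact absurd hh (by simp)
        | Nat.succ i, hj, hgetj =>
          have hd := desc_get w F hdesc i hj
          rw [hgetj] at hd
          have hFα : F (α : ℕ) = true := by rw [hFval]; exact hfα
          rw [hFα] at hd
          have hlt : (α : ℕ) < w[i]'(by omega) := of_decide_eq_true hd.symm
          refine ⟨⟨i, by omega⟩, ⟨i + 1, by omega⟩, rfl, ?_, ?_⟩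
          · apply Fin.ext
            show w[(i+1 : ℕ)]'_ = (α : ℕ)
            exact hgetj
          · show (α : ℕ) < w[(i : ℕ)]'_
            exact hlt
      · rintro ⟨x, y, hxy, hωy, hlt⟩
        have h1 : (x : ℕ) + 1 < w.length := by rw [hlen]; omega
        have hd := desc_get w F hdesc (x : ℕ) h1
        have hval : w[(x : ℕ) + 1]'h1 = (α : ℕ) := by
          have h2 : w[(y : ℕ)]'(by rw [hlen]; exact y.isLt) = (α : ℕ) :=
            congrArg Fin.val hωy
          have hy1 : (y : ℕ) = (x : ℕ) + 1 := hxy.symm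
          simp only [hy1] at h2
          exact h2
        have hlt' : (α : ℕ) < w[(x : ℕ)]'(by omega) := hlt
        rw [hval] at hd
        rw [← hFval α, hd]
        simp [hlt']
end
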